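/- Let a_j ≥ 2 be an integer and s > a_j. Then ∑_{m ≤ x, Ω(m) = s − a_j} m^{−1/a_j} = o(x^{1 − 1/a_j} (log log x)^{s−1} / log x) as x → ∞. -/

import Mathlib

open Finset

namespace OmegaAux

def PF (n : ℕ) : Finset ℕ := (Finset.Icc 2 n).filter Nat.Prime

lemma PF_eq_range (n : ℕ) : PF n = (Finset.range (n+1)).filter Nat.Prime := by
  ext p
  simp only [PF, mem_filter, Finset.mem_Icc, Finset.mem_range, Nat.lt_succ_iff]
  exact ⟨fun h => ⟨h.1.2, h.2⟩, fun h => ⟨⟨h.2.two_le, h.1⟩, h.2⟩⟩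

lemma theta_le (n : ℕ) : ∑ p ∈ PF n, Real.log p ≤ n * Real.log 4 := by
  have h1 : ∑ p ∈ PF n, Real.log p = Real.log (primorial n) := by
    rw [PF_eq_range, primorial]
    rw [← Real.log_prod (fun p hp => by
      have := (Finset.mem_filter.mp hp).2.pos
      positivity)]
    rw [Nat.cast_prod]
  rw [h1]
  calc Real.log (primorial n) ≤ Real.log ((4:ℝ)^n) := by
        apply Real.log_le_log (by exact_mod_cast primorial_pos n)
        exact_mod_cast primorial_le_4_pow n
    _ = n * Real.log 4 := by rw [Real.log_pow]

lemma PF_split {m n : ℕ} (h2 : 2 ≤ m) (hmn : m ≤ n) (f : ℕ → ℝ) :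
    ∑ p ∈ PF n, f p = ∑ p ∈ PF m, f p + ∑ p ∈ (Finset.Ioc m n).filter Nat.Prime, f p := by
  have hu : Finset.Icc 2 n = Finset.Icc 2 m ∪ Finset.Ioc m n := by
    ext p; simp only [Finset.mem_Icc, Finset.mem_union, Finset.mem_Ioc]; omega
  rw [PF, PF, ← Finset.sum_union, ← Finset.filter_union, ← hu]
  rw [Finset.disjoint_left]
  intro p hp hp'
  simp only [mem_filter, Finset.mem_Icc, Finset.mem_Ioc] at hp hp'
  omega

lemma tail_subset {m n : ℕ} : (Finset.Ioc m n).filter Nat.Prime ⊆ PF n := by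
  intro p hp
  simp only [mem_filter, Finset.mem_Ioc] at hp
  simp only [PF, mem_filter, Finset.mem_Icc]
  exact ⟨⟨hp.2.two_le, hp.1.2⟩, hp.2⟩

lemma log_nat_nonneg (p : ℕ) : 0 ≤ Real.log p := by
  rcases Nat.eq_zero_or_pos p with h | h
  · simp [h]
  · exact Real.log_nonneg (by exact_mod_cast h)

lemma chebB : ∀ n : ℕ, 2 ≤ n → ∑ p ∈ PF n, Real.log p / p ≤ 5 * Real.log n := by
  intro n
  induction n using Nat.strong_induction_on with
  | _ n ih =>
    intro hn
    have hlog2 : (0.6931471803 : ℝ) < Real.log 2 := Real.log_two_gt_d9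
    rcases le_or_gt n 3 with h3 | h4
    · interval_cases n
      · have hPF : PF 2 = {2} := by decide
        rw [hPF, Finset.sum_singleton]
        have : (0:ℝ) ≤ Real.log 2 := by linarith
        push_cast
        nlinarith
      · have hPF : PF 3 = {2, 3} := by decide
        rw [hPF]
        rw [Finset.sum_insert (by decide), Finset.sum_singleton]
        have h23 : Real.log 2 ≤ Real.log 3 := Real.log_le_log (by norm_num) (by norm_num)
        have : (0:ℝ) ≤ Real.log 2 := by linarith
        push_cast
        nlinarith
    · set m := n / 2 with hm
      have h2m : 2 ≤ m := by omega
      have hmn : m ≤ n := by omega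
      have hlt : m < n := by omega
      rw [PF_split h2m hmn]
      have hIH := ih m hlt h2m
      have hnR : (0:ℝ) < n := by positivity
      have htail : ∑ p ∈ (Finset.Ioc m n).filter Nat.Prime, Real.log p / p
          ≤ 2 * Real.log 4 := by
        have h1 : ∀ p ∈ (Finset.Ioc m n).filter Nat.Prime,
            Real.log p / p ≤ Real.log p * (2 / n) := by
          intro p hp
          simp only [mem_filter, Finset.mem_Ioc] at hp
          have hpn2 : (n:ℝ) / 2 ≤ (p:ℝ) := by
            have : n ≤ 2 * p := by omega
            have : (n:ℝ) ≤ 2 * p := by exact_mod_cast this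
            linarith
          have hppos : (0:ℝ) < p := by
            have := hp.2.pos; positivity
          have hlp : 0 ≤ Real.log p := log_nat_nonneg p
          calc Real.log p / p ≤ Real.log p / ((n:ℝ)/2) := by
                apply div_le_div_of_nonneg_left hlp (by linarith) hpn2
            _ = Real.log p * (2 / n) := by field_simp
        calc ∑ p ∈ (Finset.Ioc m n).filter Nat.Prime, Real.log p / p
            ≤ ∑ p ∈ (Finset.Ioc m n).filter Nat.Prime, Real.log p * (2/n) :=
              Finset.sum_le_sum h1
          _ = (∑ p ∈ (Finset.Ioc m n).filter Nat.Prime, Real.log p) * (2/n) := by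
              rw [← Finset.sum_mul]
          _ ≤ (∑ p ∈ PF n, Real.log p) * (2/n) := by
              apply mul_le_mul_of_nonneg_right _ (by positivity)
              exact Finset.sum_le_sum_of_subset_of_nonneg tail_subset
                (fun p _ _ => log_nat_nonneg p)
          _ ≤ (n * Real.log 4) * (2/n) := by
              apply mul_le_mul_of_nonneg_right (theta_le n) (by positivity)
          _ = 2 * Real.log 4 := by field_simp
      have hlogm : Real.log m ≤ Real.log n - Real.log 2 := by
        have hmn2 : (m:ℝ) ≤ (n:ℝ)/2 := by
          have : 2 * m ≤ n := by omega
          have : (2:ℝ) * m ≤ n := by exact_mod_cast this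
          linarith
        have hmpos : (0:ℝ) < m := by positivity
        calc Real.log m ≤ Real.log ((n:ℝ)/2) := Real.log_le_log hmpos hmn2
          _ = Real.log n - Real.log 2 := Real.log_div (by positivity) (by norm_num)
      have hlog4 : Real.log 4 = 2 * Real.log 2 := by
        rw [show (4:ℝ) = 2^2 by norm_num, Real.log_pow]; push_cast; ring
      linarith


lemma PF_sum_nonneg {n : ℕ} {f : ℕ → ℝ} (hf : ∀ p, 0 ≤ f p) : 0 ≤ ∑ p ∈ PF n, f p :=
  Finset.sum_nonneg fun p _ => hf p

lemma mertens : ∀ n : ℕ, 3 ≤ n → ∑ p ∈ PF n, (1:ℝ)/p ≤ 15 * Real.log (Real.log n) + 2 := by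
  intro n
  induction n using Nat.strong_induction_on with
  | _ n ih =>
    intro hn
    have hlog2 : (0.6931471803 : ℝ) < Real.log 2 := Real.log_two_gt_d9
    have hlogn_ge1 : (1:ℝ) ≤ Real.log n := by
      rw [show (1:ℝ) = Real.log (Real.exp 1) by rw [Real.log_exp]]
      apply Real.log_le_log (Real.exp_pos 1)
      have := Real.exp_one_lt_d9
      have h3 : (3:ℝ) ≤ n := by exact_mod_cast hn
      linarith
    have hloglog_nonneg : 0 ≤ Real.log (Real.log n) := Real.log_nonneg hlogn_ge1
    rcases le_or_gt n 8 with h8 | h9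
    · -- small case: sum over PF n ≤ sum over PF 8 = 1/2+1/3+1/5+1/7 ≤ 2
      have hsub : PF n ⊆ PF 8 := by
        apply Finset.filter_subset_filter
        apply Finset.Icc_subset_Icc_right h8
      have h1 : ∑ p ∈ PF n, (1:ℝ)/p ≤ ∑ p ∈ PF 8, (1:ℝ)/p := by
        apply Finset.sum_le_sum_of_subset_of_nonneg hsub
        intro p _ _; positivity
      have h2 : PF 8 = {2, 3, 5, 7} := by decide
      rw [h2] at h1
      have : ∑ p ∈ ({2, 3, 5, 7} : Finset ℕ), (1:ℝ)/p ≤ 2 := by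
        norm_num
      linarith
    · -- n ≥ 9
      set m := Nat.sqrt n with hm
      have h3m : 3 ≤ m := by
        have h := Nat.sqrt_le_sqrt (show 9 ≤ n by omega)
        exact le_trans (by norm_num) h
      have hmn : m ≤ n := Nat.sqrt_le_self n
      have hlt : m < n := Nat.sqrt_lt_self (by omega)
      have hIH := ih m hlt h3m
      have hnpos : (0:ℝ) < n := by positivity
      have hlogn_pos : (0:ℝ) < Real.log n := by linarith
      -- log m ≤ (1/2) log n
      have hmsq : (m:ℝ)^2 ≤ n := by
        have := Nat.sqrt_le' n
        have : (m * m : ℕ) ≤ n := Nat.sqrt_le n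
        calc (m:ℝ)^2 = ((m*m : ℕ) : ℝ) := by push_cast; ring
          _ ≤ n := by exact_mod_cast this
      have hlogm : Real.log m ≤ Real.log n / 2 := by
        have hmpos : (0:ℝ) < m := by positivity
        have h := Real.log_le_log (by positivity : (0:ℝ) < (m:ℝ)^2) hmsq
        rw [Real.log_pow] at h
        push_cast at h
        linarith
      have hloglogm : Real.log (Real.log m) ≤ Real.log (Real.log n) - Real.log 2 := by
        have hlogm_pos : (0:ℝ) < Real.log m := by
          apply Real.log_pos
          have : (3:ℝ) ≤ m := by exact_mod_cast h3m
          linarith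
        calc Real.log (Real.log m) ≤ Real.log (Real.log n / 2) :=
              Real.log_le_log hlogm_pos hlogm
          _ = Real.log (Real.log n) - Real.log 2 :=
              Real.log_div (by linarith) (by norm_num)
      -- tail
      have htail : ∑ p ∈ (Finset.Ioc m n).filter Nat.Prime, (1:ℝ)/p ≤ 10 := by
        have hterm : ∀ p ∈ (Finset.Ioc m n).filter Nat.Prime,
            (1:ℝ)/p ≤ (Real.log p / p) * (2 / Real.log n) := by
          intro p hp
          simp only [mem_filter, Finset.mem_Ioc] at hp
          have hppos : (0:ℝ) < p := by have := hp.2.pos; positivity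
          have hpsq : (n:ℝ) < (p:ℝ)^2 := by
            have h1 : n < (m+1) * (m+1) := Nat.lt_succ_sqrt n
            have h2 : m + 1 ≤ p := hp.1.1
            have : n < p * p := lt_of_lt_of_le h1 (Nat.mul_le_mul h2 h2)
            calc (n:ℝ) < ((p*p : ℕ):ℝ) := by exact_mod_cast this
              _ = (p:ℝ)^2 := by push_cast; ring
          have hlogp : Real.log n / 2 ≤ Real.log p := by
            have h := Real.log_le_log hnpos (le_of_lt hpsq)
            rw [Real.log_pow] at h
            push_cast at h
            linarith
          have hlogp_pos : (0:ℝ) < Real.log p := by linarith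
          rw [div_mul_div_comm]
          rw [div_le_div_iff₀ hppos (by positivity)]
          calc 1 * ((p:ℝ) * Real.log n) = (p:ℝ) * Real.log n := by ring
            _ ≤ (p:ℝ) * (2 * Real.log p) := by
                apply mul_le_mul_of_nonneg_left (by linarith) (le_of_lt hppos)
            _ = Real.log p * 2 * p := by ring
        calc ∑ p ∈ (Finset.Ioc m n).filter Nat.Prime, (1:ℝ)/p
            ≤ ∑ p ∈ (Finset.Ioc m n).filter Nat.Prime, (Real.log p / p) * (2 / Real.log n) :=
              Finset.sum_le_sum hterm
          _ = (∑ p ∈ (Finset.Ioc m n).filter Nat.Prime, Real.log p / p) * (2 / Real.log n) := by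
              rw [← Finset.sum_mul]
          _ ≤ (∑ p ∈ PF n, Real.log p / p) * (2 / Real.log n) := by
              apply mul_le_mul_of_nonneg_right _ (by positivity)
              apply Finset.sum_le_sum_of_subset_of_nonneg tail_subset
              intro p _ _
              have := log_nat_nonneg p
              positivity
          _ ≤ (5 * Real.log n) * (2 / Real.log n) := by
              apply mul_le_mul_of_nonneg_right (chebB n (by omega)) (by positivity)
          _ = 10 := by field_simp; ring
      rw [PF_split (by omega : 2 ≤ m) hmn]
      have h15 : 15 * Real.log 2 ≥ 10 := by linarith
      linarith


lemma log_le_two_sqrt {n : ℕ} (hn : 1 ≤ n) : Real.log n ≤ 2 * Real.sqrt n := by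
  have h0 : (0:ℝ) < n := by positivity
  have hs : (0:ℝ) < Real.sqrt n := Real.sqrt_pos.mpr h0
  have h1 : Real.log ((Real.sqrt n)^2) = 2 * Real.log (Real.sqrt n) := by
    rw [Real.log_pow]; norm_num
  rw [Real.sq_sqrt (le_of_lt h0)] at h1
  rw [h1]
  have := Real.log_le_sub_one_of_pos hs
  linarith

lemma card_PF_le (n : ℕ) : (PF n).card ≤ n := by
  calc (PF n).card ≤ (Finset.Icc 2 n).card := Finset.card_filter_le _ _
    _ = n + 1 - 2 := Nat.card_Icc 2 n
    _ ≤ n := by omega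

lemma pi_le : ∀ n : ℕ, 2 ≤ n → ((PF n).card : ℝ) ≤ 5 * n / Real.log n := by
  intro n hn
  have hnpos : (0:ℝ) < n := by positivity
  have hlogn_pos : (0:ℝ) < Real.log n := by
    apply Real.log_pos; exact_mod_cast hn
  have hlog2 : Real.log 2 < 0.6931471808 := Real.log_two_lt_d9
  rcases le_or_gt n 100 with h100 | h101
  · have h5 : Real.log n ≤ 5 := by
      calc Real.log n ≤ Real.log ((2:ℝ)^7) := by
            apply Real.log_le_log hnpos
            have : (n:ℝ) ≤ 100 := by exact_mod_cast h100
            norm_num; linarith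
        _ = 7 * Real.log 2 := by rw [Real.log_pow]; norm_num
        _ ≤ 5 := by linarith
    rw [le_div_iff₀ hlogn_pos]
    have hc : ((PF n).card : ℝ) ≤ n := by exact_mod_cast card_PF_le n
    nlinarith
  · set m := Nat.sqrt n with hm
    have h2m : 2 ≤ m := by
      have h := Nat.sqrt_le_sqrt (show 9 ≤ n by omega)
      calc 2 ≤ Nat.sqrt 9 := by norm_num
        _ ≤ m := h
    have hmn : m ≤ n := Nat.sqrt_le_self n
    have hsq : (0:ℝ) < Real.sqrt n := Real.sqrt_pos.mpr hnpos
    have hcards : ((PF n).card : ℝ) = ((PF m).card : ℝ)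
        + (((Finset.Ioc m n).filter Nat.Prime).card : ℝ) := by
      have h := PF_split h2m hmn (fun _ => (1:ℝ))
      simpa using h
    -- part 1 : card PF m ≤ sqrt n ≤ 2n/log n
    have hmsqrt : (m:ℝ) ≤ Real.sqrt n := by
      have h1 : (m*m : ℕ) ≤ n := Nat.sqrt_le n
      have h2 : (m:ℝ)*(m:ℝ) ≤ n := by exact_mod_cast h1
      nlinarith [Real.sq_sqrt (le_of_lt hnpos), Real.sqrt_nonneg (n:ℝ),
        sq_nonneg ((m:ℝ) - Real.sqrt n)]
    have hpart1 : ((PF m).card : ℝ) ≤ 2 * n / Real.log n := by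
      have hc : ((PF m).card : ℝ) ≤ m := by exact_mod_cast card_PF_le m
      have hsqle : Real.sqrt n ≤ 2 * n / Real.log n := by
        rw [le_div_iff₀ hlogn_pos]
        have hl2s := log_le_two_sqrt (show 1 ≤ n by omega)
        nlinarith [Real.sq_sqrt (le_of_lt hnpos)]
      linarith
    -- part 2 : tail card * (log n / 2) ≤ theta n ≤ n log 4
    have hpart2 : (((Finset.Ioc m n).filter Nat.Prime).card : ℝ) ≤ 3 * n / Real.log n := by
      have hbd : ∀ p ∈ (Finset.Ioc m n).filter Nat.Prime, Real.log n / 2 ≤ Real.log p := by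
        intro p hp
        simp only [mem_filter, Finset.mem_Ioc] at hp
        have h1 : n < (m+1) * (m+1) := Nat.lt_succ_sqrt n
        have h2 : m + 1 ≤ p := hp.1.1
        have h3 : n < p * p := lt_of_lt_of_le h1 (Nat.mul_le_mul h2 h2)
        have h4 : (n:ℝ) ≤ (p:ℝ)^2 := by
          have : (n:ℝ) ≤ ((p*p:ℕ):ℝ) := by exact_mod_cast le_of_lt h3
          push_cast at this; nlinarith
        have h5 := Real.log_le_log hnpos h4
        rw [Real.log_pow] at h5
        push_cast at h5
        linarith
      have hcard := Finset.card_nsmul_le_sum ((Finset.Ioc m n).filter Nat.Prime)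
        (fun p => Real.log p) (Real.log n / 2) hbd
      have hth : ∑ p ∈ (Finset.Ioc m n).filter Nat.Prime, Real.log p ≤ n * Real.log 4 := by
        calc ∑ p ∈ (Finset.Ioc m n).filter Nat.Prime, Real.log p
            ≤ ∑ p ∈ PF n, Real.log p :=
              Finset.sum_le_sum_of_subset_of_nonneg tail_subset (fun p _ _ => log_nat_nonneg p)
          _ ≤ n * Real.log 4 := theta_le n
      have hlog4 : Real.log 4 ≤ 1.4 := by
        rw [show (4:ℝ) = 2^2 by norm_num, Real.log_pow]
        push_cast; linarith
      rw [le_div_iff₀ hlogn_pos]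
      have hns : (((Finset.Ioc m n).filter Nat.Prime).card : ℝ) * (Real.log n / 2)
          ≤ n * Real.log 4 := by
        calc (((Finset.Ioc m n).filter Nat.Prime).card : ℝ) * (Real.log n / 2)
            = ((Finset.Ioc m n).filter Nat.Prime).card • (Real.log n / 2) := by
              rw [nsmul_eq_mul]
          _ ≤ ∑ p ∈ (Finset.Ioc m n).filter Nat.Prime, Real.log p := hcard
          _ ≤ n * Real.log 4 := hth
      nlinarith
    rw [hcards]
    have : (2:ℝ) * n / Real.log n + 3 * n / Real.log n = 5 * n / Real.log n := by ring
    linarith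


lemma sqrt_two_bounds : (1.41:ℝ) ≤ Real.sqrt 2 ∧ Real.sqrt 2 ≤ 1.5 := by
  constructor
  · nlinarith [Real.sq_sqrt (show (0:ℝ) ≤ 2 by norm_num), Real.sqrt_nonneg (2:ℝ)]
  · nlinarith [Real.sq_sqrt (show (0:ℝ) ≤ 2 by norm_num), Real.sqrt_nonneg (2:ℝ)]

lemma Abound (α : ℝ) (hα1 : 0 < α) (hα2 : α ≤ 1/2) :
    ∀ n : ℕ, 2 ≤ n → ∑ p ∈ PF n, (p:ℝ)^(-α) ≤ 131072 * (n:ℝ)^(1-α) / Real.log n := by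
  intro n
  induction n using Nat.strong_induction_on with
  | _ n ih =>
    intro hn
    have hnpos : (0:ℝ) < n := by positivity
    have hlogn_pos : (0:ℝ) < Real.log n := Real.log_pos (by exact_mod_cast hn)
    have hβ : (1/2 : ℝ) ≤ 1 - α := by linarith
    have hβpos : (0:ℝ) < 1 - α := by linarith
    have hXpos : (0:ℝ) < (n:ℝ)^(1-α) := Real.rpow_pos_of_pos hnpos _
    rcases le_or_gt n 65535 with hsmall | hbig
    · -- trivial bound: each term ≤ 1
      have h1 : ∑ p ∈ PF n, (p:ℝ)^(-α) ≤ ((PF n).card : ℝ) := by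
        calc ∑ p ∈ PF n, (p:ℝ)^(-α) ≤ ∑ p ∈ PF n, 1 := by
              apply Finset.sum_le_sum
              intro p hp
              simp only [PF, mem_filter, Finset.mem_Icc] at hp
              apply Real.rpow_le_one_of_one_le_of_nonpos
              · exact_mod_cast hp.1.1.trans' (by norm_num)
              · linarith
          _ = ((PF n).card : ℝ) := by simp
      have h2 : ((PF n).card : ℝ) ≤ n := by exact_mod_cast card_PF_le n
      have hsn : Real.sqrt n ≤ (n:ℝ)^(1-α) := by
        rw [Real.sqrt_eq_rpow]
        apply Real.rpow_le_rpow_of_exponent_le (by exact_mod_cast hn.trans' (by norm_num)) hβ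
      have hkey : (65536:ℝ) ≤ 131072 * (n:ℝ)^(1-α) / Real.log n := by
        rw [le_div_iff₀ hlogn_pos]
        have hl2s := log_le_two_sqrt (show 1 ≤ n by omega)
        nlinarith [Real.sqrt_nonneg (n:ℝ)]
      have hn65 : (n:ℝ) ≤ 65536 := by
        have : (n:ℕ) ≤ 65536 := by omega
        exact_mod_cast this
      linarith
    · -- n ≥ 65536
      set m := n / 2 with hm
      have h2m : 2 ≤ m := by omega
      have hmn : m ≤ n := by omega
      have hlt : m < n := by omega
      have hmpos : (0:ℝ) < m := by positivity
      rw [PF_split h2m hmn]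
      have hIH := ih m hlt h2m
      have hlogm_pos : (0:ℝ) < Real.log m := Real.log_pos (by exact_mod_cast h2m)
      -- log n ≥ 16 log 2
      have hlogn16 : 16 * Real.log 2 ≤ Real.log n := by
        calc (16:ℝ) * Real.log 2 = Real.log ((2:ℝ)^16) := by rw [Real.log_pow]; norm_num
          _ ≤ Real.log n := by
              apply Real.log_le_log (by positivity)
              have : (65536:ℕ) ≤ n := by omega
              have : (65536:ℝ) ≤ n := by exact_mod_cast this
              norm_num; linarith
      -- log m ≥ (7/8) log n
      have hm4 : (n:ℝ)/4 ≤ m := by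
        have h4 : n ≤ 4 * m := by omega
        have : (n:ℝ) ≤ 4 * m := by exact_mod_cast h4
        linarith
      have hlogm : (7/8) * Real.log n ≤ Real.log m := by
        have h1 : Real.log ((n:ℝ)/4) ≤ Real.log m := Real.log_le_log (by positivity) hm4
        have h2 : Real.log ((n:ℝ)/4) = Real.log n - Real.log 4 := Real.log_div (by positivity) (by norm_num)
        have h3 : Real.log 4 = 2 * Real.log 2 := by
          rw [show (4:ℝ) = 2^2 by norm_num, Real.log_pow]; push_cast; ring
        have hl2pos : (0:ℝ) < Real.log 2 := Real.log_pos (by norm_num)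
        linarith
      -- m^(1-α) ≤ n^(1-α)/1.41
      have hm2 : (m:ℝ) ≤ (n:ℝ)/2 := by
        have : 2 * m ≤ n := by omega
        have : (2:ℝ) * m ≤ n := by exact_mod_cast this
        linarith
      have hmpow : (m:ℝ)^(1-α) ≤ (n:ℝ)^(1-α) / 1.41 := by
        have h1 : (m:ℝ)^(1-α) ≤ ((n:ℝ)/2)^(1-α) :=
          Real.rpow_le_rpow (le_of_lt hmpos) hm2 (le_of_lt hβpos)
        have h2 : ((n:ℝ)/2)^(1-α) = (n:ℝ)^(1-α) / (2:ℝ)^(1-α) :=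
          Real.div_rpow (le_of_lt hnpos) (show (0:ℝ) ≤ 2 by norm_num) (1-α)
        have h3 : (1.41:ℝ) ≤ (2:ℝ)^(1-α) := by
          calc (1.41:ℝ) ≤ Real.sqrt 2 := sqrt_two_bounds.1
            _ = (2:ℝ)^((1:ℝ)/2) := Real.sqrt_eq_rpow 2
            _ ≤ (2:ℝ)^(1-α) := Real.rpow_le_rpow_of_exponent_le (by norm_num) hβ
        have h4 : (n:ℝ)^(1-α) / (2:ℝ)^(1-α) ≤ (n:ℝ)^(1-α) / 1.41 := by
          apply div_le_div_of_nonneg_left (le_of_lt hXpos) (by norm_num) h3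
        linarith
      have hIH2 : ∑ p ∈ PF m, (p:ℝ)^(-α) ≤ 131072 * ((8:ℝ)/(7*1.41)) * (n:ℝ)^(1-α) / Real.log n := by
        calc ∑ p ∈ PF m, (p:ℝ)^(-α) ≤ 131072 * (m:ℝ)^(1-α) / Real.log m := hIH
          _ ≤ 131072 * ((n:ℝ)^(1-α)/1.41) / ((7/8) * Real.log n) := by
              apply div_le_div₀ (by positivity) (by nlinarith) (by nlinarith) hlogm
          _ = 131072 * ((8:ℝ)/(7*1.41)) * (n:ℝ)^(1-α) / Real.log n := by
              field_simp
      -- tail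
      have htail : ∑ p ∈ (Finset.Ioc m n).filter Nat.Prime, (p:ℝ)^(-α)
          ≤ 8 * (n:ℝ)^(1-α) / Real.log n := by
        have hhalf : (0:ℝ) < (n:ℝ)/2 := by positivity
        have hterm : ∀ p ∈ (Finset.Ioc m n).filter Nat.Prime, (p:ℝ)^(-α) ≤ ((n:ℝ)/2)^(-α) := by
          intro p hp
          simp only [mem_filter, Finset.mem_Ioc] at hp
          have hple : (n:ℝ)/2 ≤ p := by
            have : n ≤ 2 * p := by omega
            have : (n:ℝ) ≤ 2 * p := by exact_mod_cast this
            linarith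
          exact Real.rpow_le_rpow_of_nonpos hhalf hple (by linarith)
        have hcard : (((Finset.Ioc m n).filter Nat.Prime).card : ℝ) ≤ 5 * n / Real.log n := by
          have h1 : ((Finset.Ioc m n).filter Nat.Prime).card ≤ (PF n).card :=
            Finset.card_le_card tail_subset
          have h2 := pi_le n (by omega)
          have : (((Finset.Ioc m n).filter Nat.Prime).card : ℝ) ≤ ((PF n).card : ℝ) := by
            exact_mod_cast h1
          linarith
        have hnhalf : ((n:ℝ)/2)^(-α) ≤ 1.5 * (n:ℝ)^(-α) := by
          have h2 : ((n:ℝ)/2)^(-α) = (n:ℝ)^(-α) / (2:ℝ)^(-α) :=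
            Real.div_rpow (le_of_lt hnpos) (show (0:ℝ) ≤ 2 by norm_num) (-α)
          have h3 : (2:ℝ)^(-α) = ((2:ℝ)^α)⁻¹ := by
            rw [Real.rpow_neg (by norm_num)]
          have h4 : (2:ℝ)^α ≤ 1.5 := by
            calc (2:ℝ)^α ≤ (2:ℝ)^((1:ℝ)/2) := Real.rpow_le_rpow_of_exponent_le (by norm_num) hα2
              _ = Real.sqrt 2 := (Real.sqrt_eq_rpow 2).symm
              _ ≤ 1.5 := sqrt_two_bounds.2
          have h5 : (1:ℝ) ≤ (2:ℝ)^α := by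
            rw [show (1:ℝ) = (2:ℝ)^(0:ℝ) by simp]
            exact Real.rpow_le_rpow_of_exponent_le (by norm_num) (le_of_lt hα1)
          have h6 : (0:ℝ) < (n:ℝ)^(-α) := Real.rpow_pos_of_pos hnpos _
          rw [h2, h3, div_inv_eq_mul]
          nlinarith
        have hcnn : (0:ℝ) ≤ ((n:ℝ)/2)^(-α) := le_of_lt (Real.rpow_pos_of_pos hhalf _)
        have hsum : ∑ p ∈ (Finset.Ioc m n).filter Nat.Prime, (p:ℝ)^(-α)
            ≤ (((Finset.Ioc m n).filter Nat.Prime).card : ℝ) * ((n:ℝ)/2)^(-α) := by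
          have := Finset.sum_le_card_nsmul ((Finset.Ioc m n).filter Nat.Prime)
            (fun p => (p:ℝ)^(-α)) (((n:ℝ)/2)^(-α)) hterm
          simpa [nsmul_eq_mul] using this
        have hid : (n:ℝ)^(1-α) = n * (n:ℝ)^(-α) := by
          rw [show (1-α) = 1 + (-α) by ring, Real.rpow_add hnpos, Real.rpow_one]
        have hnegpos : (0:ℝ) < (n:ℝ)^(-α) := Real.rpow_pos_of_pos hnpos _
        calc ∑ p ∈ (Finset.Ioc m n).filter Nat.Prime, (p:ℝ)^(-α)
            ≤ (((Finset.Ioc m n).filter Nat.Prime).card : ℝ) * ((n:ℝ)/2)^(-α) := hsum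
          _ ≤ (5 * n / Real.log n) * (1.5 * (n:ℝ)^(-α)) := by
              apply mul_le_mul hcard hnhalf hcnn (by positivity)
          _ = 7.5 * ((n:ℝ) * (n:ℝ)^(-α)) / Real.log n := by ring
          _ = 7.5 * (n:ℝ)^(1-α) / Real.log n := by rw [← hid]
          _ ≤ 8 * (n:ℝ)^(1-α) / Real.log n := by
              gcongr
              norm_num
      have hconst : 131072 * ((8:ℝ)/(7*1.41)) + 8 ≤ 131072 := by norm_num
      have hfrac_pos : (0:ℝ) < (n:ℝ)^(1-α) / Real.log n := by positivity
      have hsplit : 131072 * ((8:ℝ)/(7*1.41)) * (n:ℝ)^(1-α) / Real.log n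
            + 8 * (n:ℝ)^(1-α) / Real.log n
          = (131072 * ((8:ℝ)/(7*1.41)) + 8) * ((n:ℝ)^(1-α) / Real.log n) := by ring
      have hfin : (131072 * ((8:ℝ)/(7*1.41)) + 8) * ((n:ℝ)^(1-α) / Real.log n)
          ≤ 131072 * ((n:ℝ)^(1-α) / Real.log n) := by
        apply mul_le_mul_of_nonneg_right hconst (le_of_lt hfrac_pos)
      have : 131072 * ((n:ℝ)^(1-α) / Real.log n) = 131072 * (n:ℝ)^(1-α) / Real.log n := by ring
      linarith


noncomputable def S (α : ℝ) (r : ℕ) (y : ℝ) : ℝ :=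
  ∑ m ∈ (Finset.Icc 1 ⌊y⌋₊).filter (fun m => m.primeFactorsList.length = r), (m : ℝ)^(-α)

lemma S_nonneg (α : ℝ) (r : ℕ) (y : ℝ) : 0 ≤ S α r y :=
  Finset.sum_nonneg fun m _ => Real.rpow_nonneg (by positivity) _

lemma omega_one_filter (n : ℕ) :
    (Finset.Icc 1 n).filter (fun m => m.primeFactorsList.length = 1) = PF n := by
  ext m
  simp only [PF, mem_filter, Finset.mem_Icc]
  constructor
  · rintro ⟨⟨h1, h2⟩, h3⟩
    obtain ⟨p, hp⟩ := List.length_eq_one_iff.mp h3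
    have hpmem : p ∈ m.primeFactorsList := by rw [hp]; simp
    have hpprime : p.Prime := Nat.prime_of_mem_primeFactorsList hpmem
    have hprod : m.primeFactorsList.prod = m := Nat.prod_primeFactorsList (by omega)
    rw [hp] at hprod
    simp at hprod
    subst hprod
    exact ⟨⟨hpprime.two_le, h2⟩, hpprime⟩
  · rintro ⟨⟨h1, h2⟩, h3⟩
    rw [Nat.primeFactorsList_prime h3]
    exact ⟨⟨by omega, h2⟩, rfl⟩

lemma S_one_eq (α : ℝ) (y : ℝ) : S α 1 y = ∑ p ∈ PF ⌊y⌋₊, (p:ℝ)^(-α) := by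
  rw [S, omega_one_filter]

lemma S_le_card (α : ℝ) (hα : 0 < α) (r : ℕ) (y : ℝ) : S α r y ≤ (⌊y⌋₊ : ℝ) := by
  calc S α r y ≤ ∑ m ∈ (Finset.Icc 1 ⌊y⌋₊).filter (fun m => m.primeFactorsList.length = r), 1 := by
        apply Finset.sum_le_sum
        intro m hm
        simp only [mem_filter, Finset.mem_Icc] at hm
        apply Real.rpow_le_one_of_one_le_of_nonpos (by exact_mod_cast hm.1.1) (by linarith)
    _ = (((Finset.Icc 1 ⌊y⌋₊).filter (fun m => m.primeFactorsList.length = r)).card : ℝ) := by simp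
    _ ≤ ((Finset.Icc 1 ⌊y⌋₊).card : ℝ) := by
        exact_mod_cast Finset.card_filter_le _ _
    _ = (⌊y⌋₊ : ℝ) := by rw [Nat.card_Icc]; simp

lemma omega_cons {m : ℕ} (hm : 2 ≤ m) :
    m.primeFactorsList = m.minFac :: (m / m.minFac).primeFactorsList := by
  obtain ⟨k, rfl⟩ : ∃ k, m = k + 2 := ⟨m - 2, by omega⟩
  exact Nat.primeFactorsList_add_two k

lemma step_ineq (α : ℝ) (r : ℕ) (hr : 1 ≤ r) (y : ℝ) (hy : 0 ≤ y) :
    S α (r+1) y ≤ ∑ p ∈ PF ⌊Real.sqrt y⌋₊, (p:ℝ)^(-α) * S α r (y / p) := by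
  classical
  set A := (Finset.Icc 1 ⌊y⌋₊).filter (fun m => m.primeFactorsList.length = r+1) with hA
  set T := (PF ⌊Real.sqrt y⌋₊).sigma
      (fun p => (Finset.Icc 1 ⌊y / (p:ℝ)⌋₊).filter (fun n => n.primeFactorsList.length = r)) with hT
  set g : (Σ _ : ℕ, ℕ) → ℝ := fun q => ((q.1 : ℝ) * (q.2 : ℝ))^(-α) with hg
  set ψ : ℕ → (Σ _ : ℕ, ℕ) := fun m => ⟨m.minFac, m / m.minFac⟩ with hψ
  -- facts about members of A
  have hmem : ∀ m ∈ A, 2 ≤ m ∧ m.minFac * (m / m.minFac) = m ∧ ψ m ∈ T := by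
    intro m hm
    simp only [hA, mem_filter, Finset.mem_Icc] at hm
    obtain ⟨⟨hm1, hm2⟩, hm3⟩ := hm
    have hm2' : 2 ≤ m := by
      by_contra h
      interval_cases m
      · simp [Nat.primeFactorsList_one] at hm3
    set p := m.minFac with hp
    have hpp : p.Prime := Nat.minFac_prime (by omega)
    have hdvd : p ∣ m := Nat.minFac_dvd m
    have hpn : p * (m / p) = m := Nat.mul_div_cancel' hdvd
    set n := m / p with hn
    have hcons := omega_cons hm2'
    have hΩn : n.primeFactorsList.length = r := by
      rw [hcons] at hm3
      simpa using hm3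
    have hn2 : 2 ≤ n := by
      rcases Nat.lt_or_ge n 2 with h | h
      · interval_cases n
        · omega
        · rw [Nat.primeFactorsList_one] at hΩn; simp at hΩn; omega
      · exact h
    have hplen : p ≤ n := by
      have hq := Nat.minFac_prime (show n ≠ 1 by omega)
      have hqdvdm : n.minFac ∣ m := dvd_trans (Nat.minFac_dvd n) ⟨p, by rw [← hpn, mul_comm]⟩
      have h1 : p ≤ n.minFac := Nat.minFac_le_of_dvd hq.two_le hqdvdm
      have h2 : n.minFac ≤ n := Nat.minFac_le (by omega)
      omega
    have hpsq : p * p ≤ m := by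
      calc p * p ≤ p * n := Nat.mul_le_mul_left p hplen
        _ = m := hpn
    have hmy : (m:ℝ) ≤ y := le_trans (Nat.cast_le.mpr hm2) (Nat.floor_le hy)
    have hpfloor : p ≤ ⌊Real.sqrt y⌋₊ := by
      apply Nat.le_floor
      have h1 : ((p:ℝ))^2 ≤ y := by
        have : ((p*p : ℕ):ℝ) ≤ (m:ℝ) := by exact_mod_cast hpsq
        push_cast at this
        nlinarith
      nlinarith [Real.sq_sqrt (le_trans (by positivity) h1 : (0:ℝ) ≤ y),
        Real.sqrt_nonneg y, sq_nonneg ((p:ℝ) - Real.sqrt y)]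
    have hnfloor : n ≤ ⌊y / (p:ℝ)⌋₊ := by
      apply Nat.le_floor
      rw [le_div_iff₀ (by exact_mod_cast hpp.pos)]
      have : ((n * p : ℕ):ℝ) ≤ y := by
        rw [show n * p = m by rw [mul_comm]; exact hpn]
        exact hmy
      push_cast at this
      linarith
    refine ⟨hm2', hpn, ?_⟩
    show (⟨p, n⟩ : Σ _ : ℕ, ℕ) ∈ T
    simp only [hT, Finset.mem_sigma]
    constructor
    · simp only [PF, mem_filter, Finset.mem_Icc]
      exact ⟨⟨hpp.two_le, hpfloor⟩, hpp⟩
    · simp only [mem_filter, Finset.mem_Icc]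
      exact ⟨⟨by omega, hnfloor⟩, hΩn⟩
  -- rewrite LHS
  have hLHS : S α (r+1) y = ∑ m ∈ A, g (ψ m) := by
    apply Finset.sum_congr rfl
    intro m hm
    obtain ⟨hm2, hpn, _⟩ := hmem m hm
    simp only [hg, hψ]
    congr 1
    rw [← Nat.cast_mul]
    exact_mod_cast hpn.symm
  rw [hLHS]
  have hinj : Set.InjOn ψ A := by
    intro m1 h1 m2 h2 heq
    obtain ⟨_, hpn1, _⟩ := hmem m1 h1
    obtain ⟨_, hpn2, _⟩ := hmem m2 h2
    simp only [hψ, Sigma.mk.inj_iff] at heq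
    obtain ⟨he1, he2⟩ := heq
    have he2' : m1 / m1.minFac = m2 / m2.minFac := eq_of_heq he2
    calc m1 = m1.minFac * (m1 / m1.minFac) := hpn1.symm
      _ = m2.minFac * (m2 / m2.minFac) := by rw [he2', he1]
      _ = m2 := hpn2
  rw [← Finset.sum_image hinj]
  have hsub : A.image ψ ⊆ T := by
    intro q hq
    obtain ⟨m, hm, rfl⟩ := Finset.mem_image.mp hq
    exact (hmem m hm).2.2
  calc ∑ q ∈ A.image ψ, g q ≤ ∑ q ∈ T, g q := by
        apply Finset.sum_le_sum_of_subset_of_nonneg hsub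
        intro q _ _
        exact Real.rpow_nonneg (by positivity) _
    _ = ∑ p ∈ PF ⌊Real.sqrt y⌋₊, ∑ n ∈ (Finset.Icc 1 ⌊y / (p:ℝ)⌋₊).filter
          (fun n => n.primeFactorsList.length = r), ((p:ℝ) * (n:ℝ))^(-α) := by
        rw [hT, Finset.sum_sigma]
    _ = ∑ p ∈ PF ⌊Real.sqrt y⌋₊, (p:ℝ)^(-α) * S α r (y / p) := by
        apply Finset.sum_congr rfl
        intro p hp
        rw [S, Finset.mul_sum]
        apply Finset.sum_congr rfl
        intro n hn
        rw [Real.mul_rpow (by positivity) (by positivity)]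

noncomputable def G (y : ℝ) : ℝ := max 1 (Real.log (Real.log y))

lemma G_one_le (y : ℝ) : 1 ≤ G y := le_max_left _ _
lemma G_pos (y : ℝ) : 0 < G y := lt_of_lt_of_le one_pos (G_one_le y)

lemma loglog_le_G {u y : ℝ} (hu : 2 ≤ u) (huy : u ≤ y) :
    Real.log (Real.log u) ≤ G y := by
  rcases le_or_gt (Real.log (Real.log u)) 1 with h | h
  · exact le_trans h (G_one_le y)
  · have hlogu : 0 < Real.log u := Real.log_pos (by linarith)
    have h1 : Real.log u ≤ Real.log y := Real.log_le_log (by linarith) huy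
    have h2 : Real.log (Real.log u) ≤ Real.log (Real.log y) :=
      Real.log_le_log hlogu h1
    exact le_trans h2 (le_max_right _ _)

lemma Sbound (α : ℝ) (hα1 : 0 < α) (hα2 : α ≤ 1/2) :
    ∀ r : ℕ, 1 ≤ r → ∃ C : ℝ, 0 < C ∧ ∀ y : ℝ, 2 ≤ y →
      S α r y ≤ C * y^(1-α) * (G y)^(r-1) / Real.log y := by
  intro r
  induction r with
  | zero => omega
  | succ r ih =>
    intro _
    rcases Nat.eq_zero_or_pos r with hr0 | hr1
    · -- base case r + 1 = 1
      subst hr0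
      refine ⟨262144, by norm_num, ?_⟩
      intro y hy
      have hy0 : (0:ℝ) < y := by linarith
      have hfl2 : 2 ≤ ⌊y⌋₊ := Nat.le_floor (by exact_mod_cast hy)
      have hflpos : (0:ℝ) < (⌊y⌋₊:ℝ) := by positivity
      have hlogy_pos : 0 < Real.log y := Real.log_pos (by linarith)
      have hXpos : (0:ℝ) < y^(1-α) := Real.rpow_pos_of_pos hy0 _
      simp only [pow_zero, Nat.sub_self]
      rw [S_one_eq]
      rcases le_or_gt 4 y with h4 | h4
      · have hA := Abound α hα1 hα2 ⌊y⌋₊ hfl2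
        have hfly : (⌊y⌋₊:ℝ) ≤ y := Nat.floor_le (le_of_lt hy0)
        have hpow : ((⌊y⌋₊:ℝ))^(1-α) ≤ y^(1-α) :=
          Real.rpow_le_rpow (le_of_lt hflpos) hfly (by linarith)
        have hflhalf : y/2 ≤ (⌊y⌋₊:ℝ) := by
          have := Nat.sub_one_lt_floor y
          linarith
        have hlogfl : Real.log y / 2 ≤ Real.log (⌊y⌋₊:ℝ) := by
          have h1 : Real.log (y/2) ≤ Real.log (⌊y⌋₊:ℝ) :=
            Real.log_le_log (by linarith) hflhalf
          have h2 : Real.log (y/2) = Real.log y - Real.log 2 := Real.log_div (by linarith) (by norm_num)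
          have h3 : Real.log 2 ≤ Real.log y / 2 := by
            have h4' : Real.log 4 ≤ Real.log y := Real.log_le_log (by norm_num) h4
            have h5 : Real.log 4 = 2 * Real.log 2 := by
              rw [show (4:ℝ) = 2^2 by norm_num, Real.log_pow]; push_cast; ring
            linarith
          linarith
        have hlogfl_pos : 0 < Real.log (⌊y⌋₊:ℝ) := Real.log_pos (by exact_mod_cast hfl2)
        calc ∑ p ∈ PF ⌊y⌋₊, (p:ℝ)^(-α) ≤ 131072 * ((⌊y⌋₊:ℝ))^(1-α) / Real.log (⌊y⌋₊:ℝ) := hA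
          _ ≤ 131072 * y^(1-α) / (Real.log y / 2) := by
              apply div_le_div₀ (by positivity) (by nlinarith) (by linarith) hlogfl
          _ = 262144 * y^(1-α) * 1 / Real.log y := by field_simp; ring
      · -- 2 ≤ y < 4
        have hfl3 : ⌊y⌋₊ ≤ 3 := by
          have : (⌊y⌋₊ : ℝ) ≤ y := Nat.floor_le (le_of_lt hy0)
          by_contra h
          push_neg at h
          have : (4:ℝ) ≤ ⌊y⌋₊ := by exact_mod_cast h
          linarith
        have h1 : ∑ p ∈ PF ⌊y⌋₊, (p:ℝ)^(-α) ≤ ((PF ⌊y⌋₊).card : ℝ) := by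
          calc ∑ p ∈ PF ⌊y⌋₊, (p:ℝ)^(-α) ≤ ∑ p ∈ PF ⌊y⌋₊, 1 := by
                apply Finset.sum_le_sum
                intro p hp
                simp only [PF, mem_filter, Finset.mem_Icc] at hp
                apply Real.rpow_le_one_of_one_le_of_nonpos
                  (by exact_mod_cast le_trans (by norm_num) hp.1.1) (by linarith)
            _ = ((PF ⌊y⌋₊).card : ℝ) := by simp
        have h2 : ((PF ⌊y⌋₊).card : ℝ) ≤ 3 := by
          have : (PF ⌊y⌋₊).card ≤ (Finset.Icc 2 ⌊y⌋₊).card := Finset.card_filter_le _ _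
          have h3 : (Finset.Icc 2 ⌊y⌋₊).card = ⌊y⌋₊ + 1 - 2 := Nat.card_Icc _ _
          have : (PF ⌊y⌋₊).card ≤ 3 := by omega
          exact_mod_cast this
        have hX1 : (1:ℝ) ≤ y^(1-α) := Real.one_le_rpow (by linarith) (by linarith)
        have hlog4 : Real.log y ≤ 1.4 := by
          have h5 : Real.log y ≤ Real.log 4 := Real.log_le_log hy0 (by linarith)
          have h6 : Real.log 4 = 2 * Real.log 2 := by
            rw [show (4:ℝ) = 2^2 by norm_num, Real.log_pow]; push_cast; ring
          have := Real.log_two_lt_d9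
          linarith
        rw [le_div_iff₀ hlogy_pos]
        have hsnn : (0:ℝ) ≤ ∑ p ∈ PF ⌊y⌋₊, (p:ℝ)^(-α) :=
          Finset.sum_nonneg fun p _ => Real.rpow_nonneg (by positivity) _
        have hA1 : (∑ p ∈ PF ⌊y⌋₊, (p:ℝ)^(-α)) * Real.log y ≤ 3 * 1.4 :=
          mul_le_mul (h1.trans h2) hlog4 (le_of_lt hlogy_pos) (by norm_num)
        nlinarith
    · -- inductive step
      obtain ⟨C, hCpos, hC⟩ := ih hr1
      refine ⟨34 * C + 64, by positivity, ?_⟩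
      intro y hy
      have hy0 : (0:ℝ) < y := by linarith
      have hlogy_pos : 0 < Real.log y := Real.log_pos (by linarith)
      have hXpos : (0:ℝ) < y^(1-α) := Real.rpow_pos_of_pos hy0 _
      have hGpos := G_pos y
      have hGr : (1:ℝ) ≤ (G y)^r := one_le_pow₀ (G_one_le y)
      have hsucc : (r + 1) - 1 = r := by omega
      rw [hsucc]
      rcases le_or_gt 16 y with h16 | h16
      · -- main case
        have hsqy : (4:ℝ) ≤ Real.sqrt y := by
          have h1 : Real.sqrt 16 ≤ Real.sqrt y := Real.sqrt_le_sqrt h16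
          have h2 : Real.sqrt 16 = 4 := by
            rw [show (16:ℝ) = 4^2 by norm_num, Real.sqrt_sq (by norm_num)]
          linarith
        have hsq_pos : (0:ℝ) < Real.sqrt y := by linarith
        have hmq4 : 4 ≤ ⌊Real.sqrt y⌋₊ := Nat.le_floor (by exact_mod_cast hsqy)
        have hstep := step_ineq α r hr1 y (le_of_lt hy0)
        -- bound each term
        have hterm : ∀ p ∈ PF ⌊Real.sqrt y⌋₊, (p:ℝ)^(-α) * S α r (y / p)
            ≤ (2 * C * y^(1-α) * (G y)^(r-1) / Real.log y) * (1/p) := by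
          intro p hp
          simp only [PF, mem_filter, Finset.mem_Icc] at hp
          have hp2 : 2 ≤ p := hp.1.1
          have hppos : (0:ℝ) < p := by positivity
          have hpsqrt : (p:ℝ) ≤ Real.sqrt y := by
            calc (p:ℝ) ≤ (⌊Real.sqrt y⌋₊ : ℝ) := by exact_mod_cast hp.1.2
              _ ≤ Real.sqrt y := Nat.floor_le (le_of_lt hsq_pos)
          have hyp_ge : Real.sqrt y ≤ y / p := by
            rw [le_div_iff₀ hppos]
            nlinarith [Real.sq_sqrt (le_of_lt hy0)]
          have hyp2 : (2:ℝ) ≤ y / p := by linarith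
          have hIH := hC (y/p) hyp2
          have hGyp : G (y/p) ≤ G y := by
            apply max_le (G_one_le y)
            apply loglog_le_G hyp2
            calc y / p ≤ y / 1 := by
                  apply div_le_div_of_nonneg_left (le_of_lt hy0) (by norm_num) (by exact_mod_cast hp2.trans' (by norm_num))
              _ = y := by ring
          have hlogyp : Real.log y / 2 ≤ Real.log (y/p) := by
            have h1 : Real.log (Real.sqrt y) ≤ Real.log (y/p) :=
              Real.log_le_log hsq_pos hyp_ge
            rw [Real.log_sqrt (le_of_lt hy0)] at h1
            linarith
          have hlogyp_pos : (0:ℝ) < Real.log (y/p) := by linarith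
          have hGpow : (G (y/p))^(r-1) ≤ (G y)^(r-1) :=
            pow_le_pow_left₀ (le_of_lt (G_pos _)) hGyp _
          have hyppow : (y/p)^(1-α) = y^(1-α) / (p:ℝ)^(1-α) :=
            Real.div_rpow (le_of_lt hy0) (le_of_lt hppos) _
          have hppow_pos : (0:ℝ) < (p:ℝ)^(1-α) := Real.rpow_pos_of_pos hppos _
          have hGrpos : (0:ℝ) < (G y)^(r-1) := pow_pos hGpos _
          have hIH2 : S α r (y/p) ≤ C * (y^(1-α)/(p:ℝ)^(1-α)) * (G y)^(r-1) / (Real.log y / 2) := by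
            calc S α r (y/p) ≤ C * (y/p)^(1-α) * (G (y/p))^(r-1) / Real.log (y/p) := hIH
              _ ≤ C * (y^(1-α)/(p:ℝ)^(1-α)) * (G y)^(r-1) / (Real.log y / 2) := by
                  rw [hyppow]
                  apply div_le_div₀ (by positivity) _ (by linarith) hlogyp
                  apply mul_le_mul_of_nonneg_left hGpow (by positivity)
          have hpneg_pos : (0:ℝ) < (p:ℝ)^(-α) := Real.rpow_pos_of_pos hppos _
          calc (p:ℝ)^(-α) * S α r (y / p)
              ≤ (p:ℝ)^(-α) * (C * (y^(1-α)/(p:ℝ)^(1-α)) * (G y)^(r-1) / (Real.log y / 2)) := by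
                apply mul_le_mul_of_nonneg_left hIH2 (le_of_lt hpneg_pos)
            _ = (2 * C * y^(1-α) * (G y)^(r-1) / Real.log y) * ((p:ℝ)^(-α) / (p:ℝ)^(1-α)) := by
                field_simp
            _ = (2 * C * y^(1-α) * (G y)^(r-1) / Real.log y) * (1/p) := by
                congr 1
                rw [div_eq_mul_inv, ← Real.rpow_neg (le_of_lt hppos), ← Real.rpow_add hppos]
                rw [show -α + -(1-α) = -1 by ring, Real.rpow_neg_one]
                rw [one_div]
        have hsum2 : ∑ p ∈ PF ⌊Real.sqrt y⌋₊, (1:ℝ)/p ≤ 17 * G y := by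
          have hm := mertens ⌊Real.sqrt y⌋₊ (by omega)
          have hll : Real.log (Real.log (⌊Real.sqrt y⌋₊:ℝ)) ≤ G y := by
            apply loglog_le_G (by exact_mod_cast hmq4.trans' (by norm_num))
            calc (⌊Real.sqrt y⌋₊:ℝ) ≤ Real.sqrt y := Nat.floor_le (le_of_lt hsq_pos)
              _ ≤ y := by
                  nlinarith [Real.sq_sqrt (le_of_lt hy0)]
          have hG1 := G_one_le y
          linarith
        have hfactor_pos : (0:ℝ) < 2 * C * y^(1-α) * (G y)^(r-1) / Real.log y := by positivity
        calc S α (r+1) y ≤ ∑ p ∈ PF ⌊Real.sqrt y⌋₊, (p:ℝ)^(-α) * S α r (y / p) := hstep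
          _ ≤ ∑ p ∈ PF ⌊Real.sqrt y⌋₊, (2 * C * y^(1-α) * (G y)^(r-1) / Real.log y) * (1/p) :=
              Finset.sum_le_sum hterm
          _ = (2 * C * y^(1-α) * (G y)^(r-1) / Real.log y) * ∑ p ∈ PF ⌊Real.sqrt y⌋₊, (1:ℝ)/p := by
              rw [Finset.mul_sum]
          _ ≤ (2 * C * y^(1-α) * (G y)^(r-1) / Real.log y) * (17 * G y) := by
              apply mul_le_mul_of_nonneg_left hsum2 (le_of_lt hfactor_pos)
          _ = 34 * C * y^(1-α) * ((G y)^(r-1) * G y) / Real.log y := by ring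
          _ = 34 * C * y^(1-α) * (G y)^r / Real.log y := by
              congr 2
              rw [← pow_succ]
              congr 1
              omega
          _ ≤ (34 * C + 64) * y^(1-α) * (G y)^r / Real.log y := by
              gcongr
              linarith
      · -- 2 ≤ y < 16
        have hcard := S_le_card α hα1 (r+1) y
        have hfl : (⌊y⌋₊ : ℝ) ≤ 15 := by
          have h1 : (⌊y⌋₊:ℝ) ≤ y := Nat.floor_le (le_of_lt hy0)
          have h2 : (⌊y⌋₊:ℝ) < 16 := lt_of_le_of_lt h1 h16
          have h3 : ⌊y⌋₊ < 16 := by exact_mod_cast h2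
          have h4 : ⌊y⌋₊ ≤ 15 := by omega
          exact_mod_cast h4
        have hX1 : (1:ℝ) ≤ y^(1-α) := Real.one_le_rpow (by linarith) (by linarith)
        have hlog16 : Real.log y ≤ 2.8 := by
          have h5 : Real.log y ≤ Real.log 16 := Real.log_le_log hy0 (by linarith)
          have h6 : Real.log 16 = 4 * Real.log 2 := by
            rw [show (16:ℝ) = 2^4 by norm_num, Real.log_pow]; push_cast; ring
          have := Real.log_two_lt_d9
          linarith
        rw [le_div_iff₀ hlogy_pos]
        have hs0 := S_nonneg α (r+1) y
        have hh1 : S α (r+1) y * Real.log y ≤ 15 * 2.8 :=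
          mul_le_mul (hcard.trans hfl) hlog16 (le_of_lt hlogy_pos) (by norm_num)
        have hh2 : (1:ℝ) ≤ y^(1-α) * (G y)^r :=
          le_trans (by norm_num) (mul_le_mul hX1 hGr (by norm_num) (by linarith))
        have hXG : (0:ℝ) < y^(1-α) * (G y)^r := mul_pos hXpos (pow_pos hGpos r)
        calc S α (r+1) y * Real.log y ≤ 15 * 2.8 := hh1
          _ ≤ 64 := by norm_num
          _ ≤ 64 * (y^(1-α) * (G y)^r) := by linarith
          _ ≤ (34*C+64) * (y^(1-α) * (G y)^r) :=
              mul_le_mul_of_nonneg_right (by linarith) (le_of_lt hXG)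
          _ = (34*C+64) * y^(1-α) * (G y)^r := by ring

end OmegaAux

open OmegaAux in
theorem sum_inv_pow_omega_little_o (a s : ℕ) (ha : 2 ≤ a) (hs : a < s) :
    Filter.Tendsto (fun x : ℝ =>
      (∑ m ∈ (Finset.Icc 1 ⌊x⌋₊).filter (fun m => m.primeFactorsList.length = s - a),
          (m : ℝ) ^ (-(1 : ℝ) / a)) /
        (x ^ (1 - (1 : ℝ) / a) * (Real.log (Real.log x)) ^ (s - 1) / Real.log x))
      Filter.atTop (nhds 0) := by
  set α : ℝ := (1:ℝ) / a with hαdef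
  have haR : (2:ℝ) ≤ a := by exact_mod_cast ha
  have hα1 : 0 < α := by positivity
  have hα2 : α ≤ 1/2 := by
    rw [hαdef]
    exact one_div_le_one_div_of_le (by norm_num) haR
  have hr : 1 ≤ s - a := by omega
  obtain ⟨C, hCpos, hC⟩ := Sbound α hα1 hα2 (s - a) hr
  have hSeq : ∀ x : ℝ,
      (∑ m ∈ (Finset.Icc 1 ⌊x⌋₊).filter (fun m => m.primeFactorsList.length = s - a),
        (m : ℝ) ^ (-(1 : ℝ) / a)) = S α (s-a) x := by
    intro x
    rw [S]
    apply Finset.sum_congr rfl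
    intro m _
    rw [neg_div]
  -- facts valid for x ≥ 16
  have hkey : ∀ x : ℝ, 16 ≤ x →
      (0 ≤ (S α (s-a) x) /
        (x ^ (1 - (1:ℝ)/a) * (Real.log (Real.log x)) ^ (s - 1) / Real.log x)) ∧
      ((S α (s-a) x) /
        (x ^ (1 - (1:ℝ)/a) * (Real.log (Real.log x)) ^ (s - 1) / Real.log x)
          ≤ C / Real.log (Real.log x)) := by
    intro x hx
    have hx0 : (0:ℝ) < x := by linarith
    have hlogx : Real.log 16 ≤ Real.log x := Real.log_le_log (by norm_num) hx
    have hlog16 : (2.772:ℝ) ≤ Real.log 16 := by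
      have h6 : Real.log 16 = 4 * Real.log 2 := by
        rw [show (16:ℝ) = 2^4 by norm_num, Real.log_pow]; push_cast; ring
      have := Real.log_two_gt_d9
      linarith
    have hlogx_pos : (0:ℝ) < Real.log x := by linarith
    set L := Real.log (Real.log x) with hL
    have hL1 : (1:ℝ) ≤ L := by
      rw [hL, Real.le_log_iff_exp_le hlogx_pos]
      have := Real.exp_one_lt_d9
      linarith
    have hLpos : (0:ℝ) < L := by linarith
    have hGx : G x = L := max_eq_right hL1
    have hXpos : (0:ℝ) < x ^ (1 - (1:ℝ)/a) := Real.rpow_pos_of_pos hx0 _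
    have hDpos : (0:ℝ) < x ^ (1 - (1:ℝ)/a) * L ^ (s - 1) / Real.log x := by positivity
    constructor
    · exact div_nonneg (S_nonneg α (s-a) x) (le_of_lt hDpos)
    · have hnum : S α (s-a) x ≤ C * x^(1-α) * L^(s-a-1) / Real.log x := by
        have := hC x (by linarith)
        rwa [hGx] at this
      have h1αeq : (1 - α) = (1 - (1:ℝ)/a) := by rw [hαdef]
      rw [h1αeq] at hnum
      have hsplit : L^(s-1) = L^(s-a-1) * L^a := by
        rw [← pow_add]
        congr 1
        omega
      have hid : (C * x^(1-(1:ℝ)/a) * L^(s-a-1) / Real.log x)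
          / (x ^ (1 - (1:ℝ)/a) * L ^ (s - 1) / Real.log x) = C / L^a := by
        rw [hsplit]
        field_simp
      calc (S α (s-a) x) / (x ^ (1 - (1:ℝ)/a) * L ^ (s - 1) / Real.log x)
          ≤ (C * x^(1-(1:ℝ)/a) * L^(s-a-1) / Real.log x)
            / (x ^ (1 - (1:ℝ)/a) * L ^ (s - 1) / Real.log x) :=
            (div_le_div_iff_of_pos_right hDpos).mpr hnum
        _ = C / L^a := hid
        _ ≤ C / L := by
            apply div_le_div_of_nonneg_left (le_of_lt hCpos) hLpos
            exact le_self_pow₀ hL1 (by omega)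
  have hlim : Filter.Tendsto (fun x : ℝ => C / Real.log (Real.log x))
      Filter.atTop (nhds 0) :=
    Filter.Tendsto.div_atTop tendsto_const_nhds
      (Real.tendsto_log_atTop.comp Real.tendsto_log_atTop)
  apply tendsto_of_tendsto_of_tendsto_of_le_of_le' tendsto_const_nhds hlim
  · filter_upwards [Filter.eventually_ge_atTop (16:ℝ)] with x hx
    rw [hSeq]
    exact (hkey x hx).1
  · filter_upwards [Filter.eventually_ge_atTop (16:ℝ)] with x hx
    rw [hSeq]
    exact (hkey x hx).2
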